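/- Let $k$ be an imperfect field of characteristic $p > 0$ and $a \in k \setminus k^p$. Let $\mathfrak{g}$ be the 3-dimensional restricted Lie algebra over $k$ with basis $X, Y, Z$ satisfying $[X,Y]=[X,Z]=0$, $[Z,Y]=Y$, $X^{[p]}=X$, $Y^{[p]}=aX$, $Z^{[p]}=Z$. Then $\mathfrak{g}$ is solvable, not nilpotent, and contains no nonzero $p$-nilpotent elements. -/

import Mathlib

set_option linter.unusedSectionVars false
set_option linter.unreachableTactic false
set_option linter.unusedTactic false

attribute [local instance 100] LieRing.ofAssociativeRing

def sY (k : Type) [Field k] (p : ℕ) (a : k) : Matrix (Fin p) (Fin p) k :=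
  Matrix.of fun i j =>
    if (i : ℕ) = (j : ℕ) + 1 then 1
    else if (i : ℕ) = 0 ∧ (j : ℕ) = p - 1 then a else 0

def sZ (k : Type) [Field k] (p : ℕ) : Matrix (Fin p) (Fin p) k :=
  Matrix.diagonal fun i => if (i : ℕ) = p - 1 then 0 else ((i : ℕ) + 1 : k)

lemma mem_span_triple {R M : Type*} [CommRing R] [AddCommGroup M] [Module R M] {a b c v : M} :
    v ∈ Submodule.span R {a, b, c} ↔ ∃ x y z : R, v = x • a + y • b + z • c := by
  constructor
  · intro hv
    rw [Submodule.mem_span_insert] at hv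
    obtain ⟨x, w, hw, rfl⟩ := hv
    rw [Submodule.mem_span_insert] at hw
    obtain ⟨y, w2, hw2, rfl⟩ := hw
    rw [Submodule.mem_span_singleton] at hw2
    obtain ⟨z, rfl⟩ := hw2
    exact ⟨x, y, z, (add_assoc _ _ _).symm⟩
  · rintro ⟨x, y, z, rfl⟩
    refine Submodule.add_mem _ (Submodule.add_mem _ ?_ ?_) ?_ <;>
      exact Submodule.smul_mem _ _ (Submodule.subset_span (by simp))

variable (k : Type) [Field k] (p : ℕ) [Fact p.Prime] [CharP k p] (a : k)


lemma sZ_eq : sZ k p = Matrix.diagonal (fun i : Fin p => (((i : ℕ) + 1 : ℕ) : k)) := by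
  have hfun : (fun i : Fin p => if (i : ℕ) = p - 1 then (0:k) else ((i : ℕ) + 1 : k))
      = fun i : Fin p => (((i : ℕ) + 1 : ℕ) : k) := by
    funext i
    by_cases h : (i : ℕ) = p - 1
    · have hp : 0 < p := (Fact.out : p.Prime).pos
      have h2 : (i : ℕ) + 1 = p := by omega
      rw [if_pos h, h2, CharP.cast_eq_zero]
    · rw [if_neg h]
      push_cast
      ring
  unfold sZ
  rw [hfun]

lemma sZY : sZ k p * sY k p a - sY k p a * sZ k p = sY k p a := by
  have hp2 : 2 ≤ p := (Fact.out : p.Prime).two_le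
  ext i j
  have hi := i.isLt
  have hj := j.isLt
  simp only [Matrix.sub_apply, sZ, sY, Matrix.diagonal_mul, Matrix.mul_diagonal, Matrix.of_apply]
  by_cases h1 : (i : ℕ) = (j : ℕ) + 1
  · rw [if_pos h1]
    by_cases h2 : (i : ℕ) = p - 1
    · rw [if_pos h2, if_neg (show ¬ (j : ℕ) = p - 1 by omega)]
      have hc : ((j : ℕ) : k) + 2 = 0 := by
        have h3 : (((j : ℕ) + 2 : ℕ) : k) = ((p : ℕ) : k) := by rw [show (j:ℕ)+2 = p by omega]
        push_cast at h3
        rw [CharP.cast_eq_zero k p] at h3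
        exact_mod_cast h3
      linear_combination -hc
    · rw [if_neg h2, if_neg (show ¬ (j : ℕ) = p - 1 by omega)]
      have hc : ((i : ℕ) : k) = ((j : ℕ) : k) + 1 := by exact_mod_cast congrArg (Nat.cast : ℕ → k) h1
      linear_combination hc
  · rw [if_neg h1]
    by_cases h2 : (i : ℕ) = 0 ∧ (j : ℕ) = p - 1
    · rw [if_pos h2, if_neg (show ¬ (i : ℕ) = p - 1 by omega), if_pos h2.2, h2.1]
      norm_num
    · rw [if_neg h2]
      ring


lemma sY_pow (m : ℕ) (hm : m ≤ p) : sY k p a ^ m = Matrix.of fun (i j : Fin p) =>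
    if (i : ℕ) = (j : ℕ) + m then 1 else if (i : ℕ) + p = (j : ℕ) + m then a else 0 := by
  have hp2 : 2 ≤ p := (Fact.out : p.Prime).two_le
  induction m with
  | zero =>
    ext i j
    have hi := i.isLt; have hj := j.isLt
    simp only [pow_zero, Matrix.of_apply, Matrix.one_apply]
    by_cases h : i = j
    · subst h
      rw [if_pos rfl, if_pos (by omega : (i : ℕ) = (i : ℕ) + 0)]
    · have h' : ¬ (i : ℕ) = (j : ℕ) + 0 := fun hh => h (Fin.ext (by omega))
      rw [if_neg h, if_neg h', if_neg (by omega : ¬ (i : ℕ) + p = (j : ℕ) + 0)]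
  | succ m ih =>
    have hm' : m ≤ p := Nat.le_of_succ_le hm
    rw [pow_succ, ih hm']
    ext i j
    have hi := i.isLt; have hj := j.isLt
    rw [Matrix.mul_apply]
    by_cases hj1 : (j : ℕ) = p - 1
    · rw [Finset.sum_eq_single (⟨0, by omega⟩ : Fin p)]
      · simp only [sY, Matrix.of_apply, Fin.val_mk]
        split_ifs <;> first | ring1 | omega | (exfalso; omega) | contradiction | tauto
      · intro l _ hl
        have hl0 : (l : ℕ) ≠ 0 := fun hh => hl (Fin.ext (by simp only [Fin.val_mk]; omega))
        have hll := l.isLt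
        simp only [sY, Matrix.of_apply]
        split_ifs <;> first | ring1 | omega | (exfalso; omega) | contradiction | tauto
      · intro h; exact absurd (Finset.mem_univ _) h
    · have hj1' : (j : ℕ) + 1 < p := by omega
      rw [Finset.sum_eq_single (⟨(j : ℕ) + 1, hj1'⟩ : Fin p)]
      · simp only [sY, Matrix.of_apply, Fin.val_mk]
        split_ifs <;> first | ring1 | omega | (exfalso; omega) | contradiction | tauto
      · intro l _ hl
        have hl0 : (l : ℕ) ≠ (j : ℕ) + 1 := fun hh => hl (Fin.ext (by simp only [Fin.val_mk]; omega))
        simp only [sY, Matrix.of_apply]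
        split_ifs <;> first | ring1 | omega | (exfalso; omega) | contradiction | tauto
      · intro h; exact absurd (Finset.mem_univ _) h

lemma sY_pow_p : sY k p a ^ p = a • (1 : Matrix (Fin p) (Fin p) k) := by
  rw [sY_pow k p a p le_rfl]
  ext i j
  have hi := i.isLt; have hj := j.isLt
  simp only [Matrix.of_apply, Matrix.smul_apply, Matrix.one_apply, smul_eq_mul]
  by_cases h : i = j
  · subst h
    rw [if_neg (by omega : ¬ (i:ℕ) = (i:ℕ) + p), if_pos (by omega : (i:ℕ) + p = (i:ℕ) + p),
      if_pos rfl, mul_one]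
  · have h' : ¬ (i : ℕ) + p = (j : ℕ) + p := fun hh => h (Fin.ext (by omega))
    rw [if_neg (by omega : ¬ (i:ℕ) = (j:ℕ) + p), if_neg h', if_neg h, mul_zero]


lemma pow_sub_diag (f : Fin p → k) (y : k) (m : ℕ) (i j : Fin p)
    (h : (((Matrix.diagonal f + y • sY k p a) ^ m - (Matrix.diagonal f) ^ m) i j) ≠ 0) :
    ∃ r, 1 ≤ r ∧ r ≤ m ∧ ((i : ℕ) = (j : ℕ) + r ∨ (i : ℕ) + p = (j : ℕ) + r) := by
  induction m generalizing i j with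
  | zero => simp at h
  | succ m ih =>
    set M := Matrix.diagonal f + y • sY k p a with hM
    set D := Matrix.diagonal f with hD
    have key : M ^ (m+1) - D ^ (m+1) = (M ^ m - D ^ m) * D + y • (M ^ m * sY k p a) := by
      rw [pow_succ, pow_succ, hM]
      rw [Matrix.mul_add, sub_mul, Matrix.mul_smul]
      abel
    rw [key] at h
    rw [Matrix.add_apply, Matrix.smul_apply] at h
    rcases (by by_contra hc; push_neg at hc; rw [hc.1, hc.2] at h; simp at h :
        ((M ^ m - D ^ m) * D) i j ≠ 0 ∨ (M ^ m * sY k p a) i j ≠ 0) with h1 | h2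
    · rw [Matrix.mul_diagonal] at h1
      have h1' : (M ^ m - D ^ m) i j ≠ 0 := fun hz => h1 (by rw [hz, zero_mul])
      obtain ⟨r, hr1, hr2, hr3⟩ := ih i j h1'
      exact ⟨r, hr1, by omega, hr3⟩
    · rw [Matrix.mul_apply] at h2
      obtain ⟨l, -, hl⟩ := Finset.exists_ne_zero_of_sum_ne_zero h2
      have hYl : sY k p a l j ≠ 0 := fun hz => hl (by rw [hz, mul_zero])
      have hMl : (M ^ m) i l ≠ 0 := fun hz => hl (by rw [hz, zero_mul])
      have hi := i.isLt; have hj := j.isLt; have hlt := l.isLt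
      have hY : (l : ℕ) = (j : ℕ) + 1 ∨ ((l : ℕ) = 0 ∧ (j : ℕ) = p - 1) := by
        by_contra hc
        push_neg at hc
        apply hYl
        simp only [sY, Matrix.of_apply]
        rw [if_neg hc.1, if_neg (by tauto)]
      have hM' : i = l ∨ ∃ r, 1 ≤ r ∧ r ≤ m ∧ ((i : ℕ) = (l : ℕ) + r ∨ (i : ℕ) + p = (l : ℕ) + r) := by
        by_cases hil : i = l
        · exact Or.inl hil
        · refine Or.inr (ih i l ?_)
          intro hz
          apply hMl
          have : (M ^ m) i l = (D ^ m) i l + ((M ^ m - D ^ m)) i l := by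
            rw [Matrix.sub_apply]; ring
          rw [this, hz, hD, Matrix.diagonal_pow, Matrix.diagonal_apply_ne _ hil, zero_add]
      rcases hM' with rfl | ⟨r, hr1, hr2, hr3⟩
      · rcases hY with h' | h'
        · exact ⟨1, le_rfl, by omega, Or.inl (by omega)⟩
        · exact ⟨1, le_rfl, by omega, Or.inr (by have := (Fact.out : p.Prime).two_le; omega)⟩
      · have hp2 := (Fact.out : p.Prime).two_le
        rcases hY with h' | h' <;> rcases hr3 with h'' | h''
        · exact ⟨r + 1, by omega, by omega, Or.inl (by omega)⟩
        · exact ⟨r + 1, by omega, by omega, Or.inr (by omega)⟩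
        · exact ⟨r + 1, by omega, by omega, Or.inr (by omega)⟩
        · exact ⟨r - p + 1, by omega, by omega, Or.inr (by omega)⟩

lemma trace_pow (f : Fin p → k) (y : k) :
    Matrix.trace ((Matrix.diagonal f + y • sY k p a) ^ (p - 1)) = ∑ i, f i ^ (p - 1) := by
  have hp2 := (Fact.out : p.Prime).two_le
  have hdiag : ∀ i : Fin p, ((Matrix.diagonal f + y • sY k p a) ^ (p - 1)) i i
      = ((Matrix.diagonal f) ^ (p - 1)) i i := by
    intro i
    by_contra hc
    have : (((Matrix.diagonal f + y • sY k p a) ^ (p - 1) - (Matrix.diagonal f) ^ (p - 1)) i i) ≠ 0 := by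
      rw [Matrix.sub_apply]; exact fun hz => hc (sub_eq_zero.mp hz)
    obtain ⟨r, hr1, hr2, hr3⟩ := pow_sub_diag k p a f y (p - 1) i i this
    omega
  rw [Matrix.trace]
  rw [Finset.sum_congr rfl (fun i _ => by rw [Matrix.diag_apply, hdiag i])]
  rw [Matrix.diagonal_pow]
  simp [Matrix.diagonal_apply_eq]


lemma zmod_sum_pow_top : ∑ c : ZMod p, c ^ (p - 1) = -1 := by
  have hp2 := (Fact.out : p.Prime).two_le
  have h0 : (0 : ZMod p) ^ (p - 1) = 0 := zero_pow (by omega)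
  rw [← Finset.sum_erase_add _ _ (Finset.mem_univ (0 : ZMod p)), h0, add_zero]
  have : ∀ c ∈ Finset.univ.erase (0 : ZMod p), c ^ (p - 1) = 1 := by
    intro c hc
    exact ZMod.pow_card_sub_one_eq_one (Finset.ne_of_mem_erase hc)
  rw [Finset.sum_congr rfl this, Finset.sum_const, Finset.card_erase_of_mem (Finset.mem_univ _)]
  rw [Finset.card_univ, ZMod.card, nsmul_eq_mul, mul_one]
  have : ((p - 1 : ℕ) : ZMod p) = (p : ZMod p) - 1 := by
    push_cast [Nat.cast_sub (by omega : 1 ≤ p)]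
    ring
  rw [this, ZMod.natCast_self, zero_sub]

lemma zmod_sum_pow_lt (e : ℕ) (he : e < p - 1) : ∑ c : ZMod p, c ^ e = 0 := by
  have := FiniteField.sum_pow_lt_card_sub_one (K := ZMod p) e (by rwa [ZMod.card])
  exact this

lemma sum_affine_pow (x z : k) :
    ∑ i : Fin p, (x + z * (((i : ℕ) + 1 : ℕ) : k)) ^ (p - 1) = - z ^ (p - 1) := by
  have hp2 := (Fact.out : p.Prime).two_le
  have hp0 : 0 < p := by omega
  set φ : ZMod p →+* k := ZMod.castHom (dvd_refl p) k with hφ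
  -- reindex
  have hbij : Function.Bijective (fun i : Fin p => (((i : ℕ) + 1 : ℕ) : ZMod p)) := by
    rw [Fintype.bijective_iff_injective_and_card]
    refine ⟨?_, by simp [ZMod.card]⟩
    intro i j hij
    have hi := i.isLt; have hj := j.isLt
    have h1 := ZMod.val_cast_of_lt (show (i : ℕ) + 1 - 1 < p by omega)
    -- use val to compare
    have hij' : (((i : ℕ) + 1 : ℕ) : ZMod p) = (((j : ℕ) + 1 : ℕ) : ZMod p) := hij
    have : (((i : ℕ) + 1 : ℕ) : ZMod p).val = (((j : ℕ) + 1 : ℕ) : ZMod p).val := by rw [hij']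
    rw [ZMod.val_natCast, ZMod.val_natCast] at this
    have hmod : ((i : ℕ) + 1) % p = ((j : ℕ) + 1) % p := this
    by_cases hip : (i : ℕ) + 1 = p
    · by_cases hjp : (j : ℕ) + 1 = p
      · exact Fin.ext (by omega)
      · rw [hip, Nat.mod_self, Nat.mod_eq_of_lt (by omega)] at hmod
        omega
    · by_cases hjp : (j : ℕ) + 1 = p
      · rw [hjp, Nat.mod_self, Nat.mod_eq_of_lt (by omega)] at hmod
        omega
      · rw [Nat.mod_eq_of_lt (by omega), Nat.mod_eq_of_lt (by omega)] at hmod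
        exact Fin.ext (by omega)
  have hre : ∑ i : Fin p, (x + z * (((i : ℕ) + 1 : ℕ) : k)) ^ (p - 1)
      = ∑ c : ZMod p, (x + z * φ c) ^ (p - 1) := by
    refine Fintype.sum_bijective _ hbij _ _ (fun i => ?_)
    simp [hφ, map_natCast]
  rw [hre]
  have hexp : ∀ c : ZMod p, (x + z * φ c) ^ (p - 1)
      = ∑ t ∈ Finset.range p, x ^ t * (z * φ c) ^ (p - 1 - t) * ((p-1).choose t) := by
    intro c
    rw [add_pow, show (p - 1) + 1 = p by omega]
  rw [Finset.sum_congr rfl fun c _ => hexp c, Finset.sum_comm]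
  have hterm : ∀ t ∈ Finset.range p,
      (∑ c : ZMod p, x ^ t * (z * φ c) ^ (p - 1 - t) * ((p-1).choose t))
      = if t = 0 then - z ^ (p-1) else 0 := by
    intro t ht
    rw [Finset.mem_range] at ht
    have hpull : ∀ c : ZMod p, x ^ t * (z * φ c) ^ (p - 1 - t) * ((p-1).choose t)
        = (x ^ t * z ^ (p - 1 - t) * ((p-1).choose t)) * φ (c ^ (p - 1 - t)) := by
      intro c
      rw [mul_pow, map_pow]
      ring
    rw [Finset.sum_congr rfl fun c _ => hpull c, ← Finset.mul_sum, ← map_sum]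
    by_cases ht0 : t = 0
    · subst ht0
      simp only [Nat.sub_zero]
      rw [zmod_sum_pow_top p]
      simp
    · rw [zmod_sum_pow_lt p _ (by omega), map_zero, mul_zero, if_neg ht0]
  rw [Finset.sum_congr rfl hterm, Finset.sum_ite_eq' (Finset.range p) 0 (fun _ => - z ^ (p-1))]
  rw [if_pos (Finset.mem_range.mpr hp0)]


lemma lie_sZ_sY : ⁅sZ k p, sY k p a⁆ = sY k p a := by
  rw [Ring.lie_def]; exact sZY k p a

lemma lie_sY_sZ : ⁅sY k p a, sZ k p⁆ = - sY k p a := by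
  rw [← lie_skew, lie_sZ_sY]

lemma bracket_pair (u v : Matrix (Fin p) (Fin p) k)
    (hu : u ∈ Submodule.span k {(1 : Matrix (Fin p) (Fin p) k), sY k p a, sZ k p})
    (hv : v ∈ Submodule.span k {(1 : Matrix (Fin p) (Fin p) k), sY k p a, sZ k p}) :
    ∃ c : k, ⁅u, v⁆ = c • sY k p a := by
  rw [mem_span_triple] at hu hv
  obtain ⟨x1, y1, z1, rfl⟩ := hu
  obtain ⟨x2, y2, z2, rfl⟩ := hv
  have h1 : ∀ B : Matrix (Fin p) (Fin p) k, ⁅(1 : Matrix (Fin p) (Fin p) k), B⁆ = 0 := by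
    intro B; rw [Ring.lie_def]; simp
  have h1' : ∀ B : Matrix (Fin p) (Fin p) k, ⁅B, (1 : Matrix (Fin p) (Fin p) k)⁆ = 0 := by
    intro B; rw [Ring.lie_def]; simp
  refine ⟨z1 * y2 - y1 * z2, ?_⟩
  simp only [add_lie, lie_add, smul_lie, lie_smul, h1, h1', lie_self, lie_sZ_sY, lie_sY_sZ,
    smul_zero, zero_add, add_zero]
  module

def sL : LieSubalgebra k (Matrix (Fin p) (Fin p) k) :=
  { Submodule.span k {(1 : Matrix (Fin p) (Fin p) k), sY k p a, sZ k p} with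
    lie_mem' := fun {u v} hu hv => by
      obtain ⟨c, hc⟩ := bracket_pair k p a u v hu hv
      rw [hc]
      exact Submodule.smul_mem _ _ (Submodule.subset_span (by simp)) }

lemma mem_sL {M : Matrix (Fin p) (Fin p) k} :
    M ∈ LieSubalgebra.lieSpan k (Matrix (Fin p) (Fin p) k) {1, sY k p a, sZ k p}
      ↔ ∃ x y z : k, M = x • 1 + y • sY k p a + z • sZ k p := by
  have heq : LieSubalgebra.lieSpan k (Matrix (Fin p) (Fin p) k) {1, sY k p a, sZ k p}
      = sL k p a := by
    apply le_antisymm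
    · rw [LieSubalgebra.lieSpan_le]
      intro u hu
      exact Submodule.subset_span hu
    · intro u hu
      exact Submodule.span_le.mpr (LieSubalgebra.subset_lieSpan) hu
  rw [heq]
  exact mem_span_triple

lemma span_of_mem_sL {M : Matrix (Fin p) (Fin p) k}
    (h : M ∈ LieSubalgebra.lieSpan k (Matrix (Fin p) (Fin p) k) {1, sY k p a, sZ k p}) :
    M ∈ Submodule.span k {(1 : Matrix (Fin p) (Fin p) k), sY k p a, sZ k p} :=
  mem_span_triple.mpr ((mem_sL k p a).mp h)

/-- Solvability. -/
lemma sL_solvable :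
    LieAlgebra.IsSolvable
      ↥(LieSubalgebra.lieSpan k (Matrix (Fin p) (Fin p) k) {1, sY k p a, sZ k p}) := by
  set L' := LieSubalgebra.lieSpan k (Matrix (Fin p) (Fin p) k) {1, sY k p a, sZ k p} with hL'
  -- the submodule of multiples of Y
  refine (LieAlgebra.isSolvable_iff (R := k) (L := ↥L')).mpr ⟨2, ?_⟩
  let P : LieSubmodule k ↥L' ↥L' :=
    { carrier := {m : ↥L' | ∃ c : k, (m : Matrix (Fin p) (Fin p) k) = c • sY k p a}
      add_mem' := by
        rintro u v ⟨c, hc⟩ ⟨d, hd⟩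
        exact ⟨c + d, by push_cast [hc, hd]; rw [add_smul]⟩
      zero_mem' := ⟨0, by simp⟩
      smul_mem' := by
        rintro t u ⟨c, hc⟩
        exact ⟨t * c, by rw [show ((t • u : ↥L') : Matrix (Fin p) (Fin p) k)
          = t • (u : Matrix (Fin p) (Fin p) k) from rfl, hc, smul_smul]⟩
      lie_mem := by
        rintro x m ⟨c, hc⟩
        obtain ⟨c', hc'⟩ := bracket_pair k p a (x : Matrix (Fin p) (Fin p) k) (sY k p a)
          (span_of_mem_sL k p a x.2)
          (Submodule.subset_span (by simp))
        refine ⟨c * c', ?_⟩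
        have hsm : ⁅(x : Matrix (Fin p) (Fin p) k), c • sY k p a⁆
            = c • ⁅(x : Matrix (Fin p) (Fin p) k), sY k p a⁆ := by
          rw [Ring.lie_def, Ring.lie_def, mul_smul_comm, smul_mul_assoc, smul_sub]
        rw [LieSubalgebra.coe_bracket, hc, hsm, hc', smul_smul]  }
  have hD1 : LieAlgebra.derivedSeries k ↥L' 1 ≤ P := by
    rw [LieAlgebra.derivedSeries_def, LieAlgebra.derivedSeriesOfIdeal_succ,
      LieAlgebra.derivedSeriesOfIdeal_zero, LieSubmodule.lie_le_iff]
    intro x _ m _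
    obtain ⟨c, hc⟩ := bracket_pair k p a (x : Matrix (Fin p) (Fin p) k)
      (m : Matrix (Fin p) (Fin p) k) (span_of_mem_sL k p a x.2) (span_of_mem_sL k p a m.2)
    exact ⟨c, by rw [LieSubalgebra.coe_bracket, hc]⟩
  rw [show LieAlgebra.derivedSeries k ↥L' 2 = ⁅LieAlgebra.derivedSeries k ↥L' 1,
        LieAlgebra.derivedSeries k ↥L' 1⁆ from by
      rw [LieAlgebra.derivedSeries_def, LieAlgebra.derivedSeries_def,
        LieAlgebra.derivedSeriesOfIdeal_succ],
    LieSubmodule.lie_eq_bot_iff]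
  intro x hx m hm
  obtain ⟨c, hc⟩ := hD1 hx
  obtain ⟨d, hd⟩ := hD1 hm
  apply Subtype.ext
  rw [LieSubalgebra.coe_bracket, hc, hd, ZeroMemClass.coe_zero, Ring.lie_def,
    smul_mul_assoc, smul_mul_assoc, mul_smul_comm, mul_smul_comm, smul_smul, smul_smul,
    mul_comm c d, sub_self]

lemma sY_mem : sY k p a ∈ LieSubalgebra.lieSpan k (Matrix (Fin p) (Fin p) k)
    {1, sY k p a, sZ k p} := LieSubalgebra.subset_lieSpan (by simp)

lemma sZ_mem : sZ k p ∈ LieSubalgebra.lieSpan k (Matrix (Fin p) (Fin p) k)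
    {1, sY k p a, sZ k p} := LieSubalgebra.subset_lieSpan (by simp)

lemma sY_ne_zero : sY k p a ≠ 0 := by
  have hp2 := (Fact.out : p.Prime).two_le
  intro h
  have := congrFun (congrFun (congrArg (fun M => (M : Matrix (Fin p) (Fin p) k)) h)
    ⟨1, by omega⟩) ⟨0, by omega⟩
  simp only [sY, Matrix.of_apply, Matrix.zero_apply, Fin.val_mk] at this
  simp at this

/-- Non-nilpotency. -/
lemma sL_not_nilpotent :
    ¬ LieRing.IsNilpotent
      ↥(LieSubalgebra.lieSpan k (Matrix (Fin p) (Fin p) k) {1, sY k p a, sZ k p}) := by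
  set L' := LieSubalgebra.lieSpan k (Matrix (Fin p) (Fin p) k) {1, sY k p a, sZ k p} with hL'
  intro h
  obtain ⟨n, hn⟩ := (LieModule.isNilpotent_iff k ↥L' ↥L').mp h
  set YL : ↥L' := ⟨sY k p a, sY_mem k p a⟩ with hYL
  set ZL : ↥L' := ⟨sZ k p, sZ_mem k p a⟩ with hZL
  have hbr : ⁅ZL, YL⁆ = YL := by
    apply Subtype.ext
    rw [LieSubalgebra.coe_bracket]
    exact lie_sZ_sY k p a
  have hmem : ∀ m, YL ∈ LieModule.lowerCentralSeries k ↥L' ↥L' m := by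
    intro m
    induction m with
    | zero => simp
    | succ m ih =>
      rw [LieModule.lowerCentralSeries_succ, ← hbr]
      exact LieSubmodule.lie_mem_lie (LieSubmodule.mem_top _) ih
  have := hmem n
  rw [hn, LieSubmodule.mem_bot] at this
  apply sY_ne_zero k p a
  have : (YL : Matrix (Fin p) (Fin p) k) = 0 := by rw [this]; rfl
  exact this

/-- No nonzero p-nilpotent elements. -/
lemma sL_no_pnilpotent (ha : ∀ b : k, b ^ p ≠ a) :
    ∀ M ∈ LieSubalgebra.lieSpan k (Matrix (Fin p) (Fin p) k) {1, sY k p a, sZ k p},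
      (∃ n : ℕ, M ^ (p ^ n) = 0) → M = 0 := by
  have hp2 := (Fact.out : p.Prime).two_le
  have hp0 : 0 < p := by omega
  haveI : Nonempty (Fin p) := ⟨⟨0, hp0⟩⟩
  intro M hmem ⟨n, hn⟩
  obtain ⟨x, y, z, hM⟩ := (mem_sL k p a).mp hmem
  cases n with
  | zero =>
    rw [pow_zero, pow_one] at hn
    exact hn
  | succ m =>
    -- first, z = 0 via the trace of M^(p-1)
    set f : Fin p → k := fun i => x + z * (((i : ℕ) + 1 : ℕ) : k) with hf
    have hDiag : x • (1 : Matrix (Fin p) (Fin p) k) + z • sZ k p = Matrix.diagonal f := by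
      rw [sZ_eq k p]
      ext i j
      by_cases hij : i = j
      · subst hij
        simp [Matrix.one_apply_eq, Matrix.diagonal_apply_eq, hf]
      · simp [Matrix.one_apply_ne hij, Matrix.diagonal_apply_ne _ hij]
    have hMD : M = Matrix.diagonal f + y • sY k p a := by
      rw [hM, ← hDiag]; abel
    have hnil : IsNilpotent M := ⟨p ^ (m+1), hn⟩
    have hnil2 : IsNilpotent (M ^ (p - 1)) := by
      refine ⟨p ^ (m+1), ?_⟩
      rw [← pow_mul, mul_comm, pow_mul, hn, zero_pow (by omega)]
    have htr0 : Matrix.trace (M ^ (p - 1)) = 0 :=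
      (Matrix.isNilpotent_trace_of_isNilpotent hnil2).eq_zero
    have htr : Matrix.trace (M ^ (p - 1)) = - z ^ (p - 1) := by
      rw [hMD, trace_pow k p a f y, hf]
      exact sum_affine_pow k p x z
    have hz : z = 0 := by
      rw [htr] at htr0
      have := neg_eq_zero.mp htr0
      exact pow_eq_zero_iff (n := p - 1) (by omega) |>.mp this
    subst hz
    rw [zero_smul, add_zero] at hM
    -- now M = x•1 + y•Y
    have hcom : Commute (x • (1 : Matrix (Fin p) (Fin p) k)) (y • sY k p a) :=
      ((Commute.one_left (sY k p a)).smul_left x).smul_right y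
    have hMp : M ^ p = (x ^ p + y ^ p * a) • (1 : Matrix (Fin p) (Fin p) k) := by
      rw [hM, add_pow_char_of_commute _ hcom, smul_pow, smul_pow, one_pow, sY_pow_p k p a,
        smul_smul, ← add_smul]
    have hMpn : M ^ (p ^ (m+1)) = ((x ^ p + y ^ p * a) ^ (p ^ m)) •
        (1 : Matrix (Fin p) (Fin p) k) := by
      rw [show p ^ (m+1) = p * p ^ m from by ring, pow_mul, hMp, smul_pow, one_pow]
    rw [hn] at hMpn
    have hc0 : x ^ p + y ^ p * a = 0 := by
      have := congrFun (congrFun hMpn ⟨0, hp0⟩) ⟨0, hp0⟩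
      simp only [Matrix.zero_apply, Matrix.smul_apply, Matrix.one_apply_eq, smul_eq_mul,
        mul_one] at this
      exact pow_eq_zero_iff (n := p ^ m) ((Nat.pow_pos (n := m) hp0).ne') |>.mp this.symm
    by_cases hy : y = 0
    · subst hy
      have hx : x = 0 := by
        have h' : x ^ p = 0 := by
          rw [zero_pow (by omega : p ≠ 0), zero_mul, add_zero] at hc0
          exact hc0
        exact pow_eq_zero_iff (n := p) (by omega) |>.mp h'
      subst hx
      rw [hM]; simp
    · exfalso
      have hyp : y ^ p ≠ 0 := pow_ne_zero _ hy
      apply ha (-(x * y⁻¹))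
      calc (-(x * y⁻¹)) ^ p = (-1) ^ p * (x * y⁻¹) ^ p := by rw [← neg_one_mul, mul_pow]
        _ = -(x ^ p * (y ^ p)⁻¹) := by rw [neg_one_pow_char k p, mul_pow, inv_pow]; ring
        _ = a := by
            rw [show x ^ p = -(y ^ p * a) from by linear_combination hc0]
            field_simp


/- Sercombe's example: over an imperfect field `k` of characteristic `p > 0` with
`a ∈ k \ kᵖ`, the 3-dimensional restricted Lie algebra `𝔤 = ⟨X, Y, Z⟩` with
`[X,Y] = [X,Z] = 0`, `[Z,Y] = Y`, `X^[p] = X`, `Y^[p] = aX`, `Z^[p] = Z` is solvable,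
not nilpotent, and has no nonzero `p`-nilpotent elements.  We realize `𝔤` by its
faithful restricted representation in `𝔤𝔩_p` given in the paper:
`X = 1`, `Y` the cyclic matrix with subdiagonal `1`s and top-right entry `a`, and
`Z = diag (1, 2, …, p-1, 0)`; the `p`-operation of `𝔤𝔩_p` is the `p`-th matrix power,
so `p`-nilpotency of `M` means `M ^ (p ^ n) = 0` for some `n`. -/
theorem sercombe_example_solvable_not_nilpotent_no_pNilpotent
    (k : Type) [Field k] (p : ℕ) [Fact p.Prime] [CharP k p]
    (a : k) (ha : ∀ b : k, b ^ p ≠ a) :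
    let X : Matrix (Fin p) (Fin p) k := 1
    let Y : Matrix (Fin p) (Fin p) k := Matrix.of fun i j =>
      if (i : ℕ) = (j : ℕ) + 1 then 1
      else if (i : ℕ) = 0 ∧ (j : ℕ) = p - 1 then a else 0
    let Z : Matrix (Fin p) (Fin p) k :=
      Matrix.diagonal fun i => if (i : ℕ) = p - 1 then 0 else ((i : ℕ) + 1 : k)
    let L : LieSubalgebra k (Matrix (Fin p) (Fin p) k) :=
      LieSubalgebra.lieSpan k (Matrix (Fin p) (Fin p) k) {X, Y, Z}
    LieAlgebra.IsSolvable L ∧ ¬ LieRing.IsNilpotent L ∧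
      ∀ M ∈ L, (∃ n : ℕ, M ^ (p ^ n) = 0) → M = 0 := by
  intro X Y Z L
  refine ⟨sL_solvable k p a, sL_not_nilpotent k p a, sL_no_pnilpotent k p a ha⟩
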